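/- For any a > 4 and ε > 0, the signed measure μ = δ_0 − 3δ_ε + 3δ_{2ε} − δ_{3ε} on ℝ has interaction energy E_{a,2}[μ] = (ε^a/a)(−15 + 6·2^a − 3^a) for the potential W_{a,2}(x) = |x|^a/a − |x|^2/2, and this quantity is negative; moreover it equals zero when a = 4. -/

import Mathlib

open Finset

noncomputable section

/-- The potential `W_{a,2}(x) = |x|^a/a - |x|^2/2` on `ℝ`. -/
def Wa2 (a x : ℝ) : ℝ := |x| ^ a / a - |x| ^ (2:ℝ) / 2

/-- The interaction energy `E[μ] = (1/2)∑ᵢ∑ⱼ wᵢ wⱼ W(pᵢ - pⱼ)` of a linear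
combination of Dirac masses `μ = ∑ᵢ wᵢ δ_{pᵢ}`. -/
def diracEnergy {n : ℕ} (W : ℝ → ℝ) (w p : Fin n → ℝ) : ℝ :=
  (1 / 2) * ∑ i, ∑ j, w i * w j * W (p i - p j)

lemma coef_neg_aux {a : ℝ} (ha : 4 < a) : -15 + 6 * (2:ℝ) ^ a - 3 ^ a < 0 := by
  set f : ℝ → ℝ := fun x => -15 + 6 * (2:ℝ) ^ x - 3 ^ x with hf
  have hd : ∀ x : ℝ, HasDerivAt f (6 * ((2:ℝ) ^ x * Real.log 2) - (3:ℝ) ^ x * Real.log 3) x := by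
    intro x
    have h2 := (Real.hasStrictDerivAt_const_rpow (by norm_num : (0:ℝ) < 2) x).hasDerivAt
    have h3 := (Real.hasStrictDerivAt_const_rpow (by norm_num : (0:ℝ) < 3) x).hasDerivAt
    simpa [hf, add_sub_assoc] using ((h2.const_mul 6).sub h3).const_add (-15)
  have hnum : 96 * Real.log 2 < 81 * Real.log 3 := by
    have := Real.log_lt_log (by positivity : (0:ℝ) < 2 ^ (96:ℕ)) (by norm_num : (2:ℝ) ^ (96:ℕ) < 3 ^ (81:ℕ))
    rw [Real.log_pow, Real.log_pow] at this
    push_cast at this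
    linarith
  have hanti : StrictAntiOn f (Set.Ici 4) := by
    apply strictAntiOn_of_deriv_neg (convex_Ici 4)
      (fun x _ => (hd x).continuousAt.continuousWithinAt)
    intro x hx
    rw [interior_Ici] at hx
    rw [(hd x).deriv]
    have h2p : (0:ℝ) < (2:ℝ) ^ x := Real.rpow_pos_of_pos two_pos x
    have l3pos : (0:ℝ) < Real.log 3 := Real.log_pos (by norm_num)
    have h32 : (81/16 : ℝ) ≤ (3/2 : ℝ) ^ x := by
      calc (81/16 : ℝ) = (3/2 : ℝ) ^ ((4:ℕ):ℝ) := by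
            rw [Real.rpow_natCast]; norm_num
        _ ≤ (3/2 : ℝ) ^ x := Real.rpow_le_rpow_of_exponent_le (by norm_num)
            (by push_cast; linarith [(Set.mem_Ioi.mp hx).le, Set.mem_Ioi.mp hx])
    have h3eq : (3:ℝ) ^ x = (3/2 : ℝ) ^ x * 2 ^ x := by
      rw [← Real.mul_rpow (by norm_num) (by norm_num)]; norm_num
    have key1 : 96 * Real.log 2 * 2 ^ x < 81 * Real.log 3 * 2 ^ x :=
      mul_lt_mul_of_pos_right hnum h2p
    have key2 : 81/16 * ((2:ℝ) ^ x * Real.log 3) ≤ (3/2 : ℝ) ^ x * ((2:ℝ) ^ x * Real.log 3) :=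
      mul_le_mul_of_nonneg_right h32 (le_of_lt (mul_pos h2p l3pos))
    rw [h3eq]
    nlinarith [key1, key2]
  have h4 : f 4 = 0 := by
    have e2 : (2:ℝ) ^ (4:ℝ) = 16 := by
      rw [show (4:ℝ) = ((4:ℕ):ℝ) by norm_num, Real.rpow_natCast]; norm_num
    have e3 : (3:ℝ) ^ (4:ℝ) = 81 := by
      rw [show (4:ℝ) = ((4:ℕ):ℝ) by norm_num, Real.rpow_natCast]; norm_num
    simp only [hf, e2, e3]; norm_num
  have := hanti (Set.self_mem_Ici) (Set.mem_Ici.mpr ha.le) ha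
  rw [h4] at this
  simpa [hf] using this

lemma energy_eq_aux {a : ℝ} (ha : 0 < a) {ε : ℝ} (hε : 0 < ε) :
    diracEnergy (Wa2 a) ![1, -3, 3, -1] ![0, ε, 2 * ε, 3 * ε]
      = ε ^ a / a * (-15 + 6 * 2 ^ a - 3 ^ a) := by
  have h0 : (0:ℝ) ^ a = 0 := Real.zero_rpow ha.ne'
  have habs : ∀ x : ℝ, 0 ≤ x → |(-x)| = x := fun x hx => by rw [abs_neg, abs_of_nonneg hx]
  have hm : ∀ k : ℝ, 0 ≤ k → ∀ b : ℝ, (k * ε) ^ b = k ^ b * ε ^ b :=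
    fun k hk b => Real.mul_rpow hk hε.le
  have h2 : (ε:ℝ) ^ (2:ℝ) = ε ^ (2:ℕ) := by rw [Real.rpow_two]
  simp only [diracEnergy, Wa2, Fin.sum_univ_four, Matrix.cons_val_zero, Matrix.cons_val_one,
    Matrix.head_cons, Matrix.cons_val_two, Matrix.tail_cons, Matrix.cons_val_three]
  have e1 : (0:ℝ) - ε = -(1*ε) := by ring
  have e2 : (0:ℝ) - 2*ε = -(2*ε) := by ring
  have e3 : (0:ℝ) - 3*ε = -(3*ε) := by ring
  have e4 : ε - 2*ε = -(1*ε) := by ring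
  have e5 : ε - 3*ε = -(2*ε) := by ring
  have e6 : 2*ε - 3*ε = -(1*ε) := by ring
  have e7 : ε - 0 = 1*ε := by ring
  have e8 : 2*ε - 0 = 2*ε := by ring
  have e9 : 3*ε - 0 = 3*ε := by ring
  have e10 : 2*ε - ε = 1*ε := by ring
  have e11 : 3*ε - ε = 2*ε := by ring
  have e12 : 3*ε - 2*ε = 1*ε := by ring
  rw [e1, e2, e3, e4, e5, e6, e7, e8, e9, e10, e11, e12, sub_self, sub_self, sub_self, sub_self]
  rw [habs _ (by positivity), habs _ (by positivity), habs _ (by positivity)]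
  rw [abs_of_nonneg (by positivity : (0:ℝ) ≤ 1*ε), abs_of_nonneg (by positivity : (0:ℝ) ≤ 2*ε),
    abs_of_nonneg (by positivity : (0:ℝ) ≤ 3*ε), abs_zero]
  simp only [hm 1 one_pos.le, hm 2 two_pos.le, hm 3 (by norm_num : (0:ℝ) ≤ 3), h0,
    Real.zero_rpow (by norm_num : (2:ℝ) ≠ 0), Real.one_rpow,
    show ((2:ℝ)) ^ (2:ℝ) = 4 by rw [Real.rpow_two]; norm_num,
    show ((3:ℝ)) ^ (2:ℝ) = 9 by rw [Real.rpow_two]; norm_num, h2]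
  ring

/-- For the signed measure `μ = δ_0 - 3δ_ε + 3δ_{2ε} - δ_{3ε}` and the potential
`W_{a,2}`, the interaction energy equals `(ε^a/a)(-15 + 6·2^a - 3^a)`; for `a > 4` this
quantity is negative, and it vanishes for `a = 4`. -/
theorem dirac_quadruple_energy :
    (∀ a : ℝ, 4 < a → ∀ ε : ℝ, 0 < ε →
      diracEnergy (Wa2 a) ![1, -3, 3, -1] ![0, ε, 2 * ε, 3 * ε]
          = ε ^ a / a * (-15 + 6 * 2 ^ a - 3 ^ a) ∧
        diracEnergy (Wa2 a) ![1, -3, 3, -1] ![0, ε, 2 * ε, 3 * ε] < 0) ∧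
    (∀ ε : ℝ, 0 < ε →
      diracEnergy (Wa2 4) ![1, -3, 3, -1] ![0, ε, 2 * ε, 3 * ε] = 0) := by
  constructor
  · intro a ha ε hε
    have ha0 : (0:ℝ) < a := by linarith
    have heq := energy_eq_aux ha0 hε
    refine ⟨heq, ?_⟩
    rw [heq]
    have h1 : (0:ℝ) < ε ^ a / a := div_pos (Real.rpow_pos_of_pos hε a) ha0
    exact mul_neg_of_pos_of_neg h1 (coef_neg_aux ha)
  · intro ε hε
    rw [energy_eq_aux (by norm_num : (0:ℝ) < 4) hε]
    have e2 : (2:ℝ) ^ (4:ℝ) = 16 := by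
      rw [show (4:ℝ) = ((4:ℕ):ℝ) by norm_num, Real.rpow_natCast]; norm_num
    have e3 : (3:ℝ) ^ (4:ℝ) = 81 := by
      rw [show (4:ℝ) = ((4:ℕ):ℝ) by norm_num, Real.rpow_natCast]; norm_num
    rw [e2, e3]; norm_num

end
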